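/- Upper bound for the two-particle energy on the unit square: there exists a constant C, independent of R, m and α ∈ [0,2], such that E^R_2(m) ≤ C for all R > 0 and all m ≥ 0, where E^R_2(m) is the two-particle fermionic Neumann energy on the unit square Q₀ = [0,1]² with m exterior particles. -/

import Mathlib

open MeasureTheory

noncomputable section

abbrev E2 : Type := EuclideanSpace ℝ (Fin 2)

/-- The 90° rotation `(x¹,x²)^⊥ := (−x²,x¹)`. -/
def perp (x : E2) : E2 := (WithLp.equiv 2 (Fin 2 → ℝ)).symm ![-(x 1), x 0]

/-- Regularized norm `|x|_R := max(|x|, R)`. -/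
def regNorm (R : ℝ) (x : E2) : ℝ := max ‖x‖ R

def basisVec (c : Fin 2) : E2 := EuclideanSpace.single c 1

/-- The direction in `N`-particle configuration space corresponding to moving
particle `j` in coordinate direction `c`. -/
def dirv (N : ℕ) (j : Fin N) (c : Fin 2) : Fin N → E2 :=
  Function.update (0 : Fin N → E2) j (basisVec c)

/-- Antisymmetry of an `N`-particle wave function. -/
def Antisym (N : ℕ) (Ψ : (Fin N → E2) → ℂ) : Prop :=
  ∀ σ : Equiv.Perm (Fin N), ∀ X : Fin N → E2,
    Ψ (X ∘ σ) = ((Equiv.Perm.sign σ : ℤ) : ℂ) * Ψ X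

/-- One-particle density `ρ_Ψ`. -/
def density (N : ℕ) (Ψ : (Fin N → E2) → ℂ) (x : E2) : ℝ :=
  ∑ j : Fin N, ∫ Y : {k : Fin N // k ≠ j} → E2,
    ‖Ψ (fun k => if h : k = j then x else Y ⟨k, h⟩)‖ ^ 2

/-- Component `c` of `∇_{x_j} |Ψ|` at configuration `X`. -/
def gradAbs {N : ℕ} (Ψ : (Fin N → E2) → ℂ) (j : Fin N) (X : Fin N → E2) (c : Fin 2) : ℝ :=
  fderiv ℝ (fun Z => ‖Ψ Z‖) X (dirv N j c)

/-- The axis-parallel closed square with lower-left corner `a` and side length `L`. -/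
def square (a : E2) (L : ℝ) : Set E2 := {x | ∀ i : Fin 2, x i ∈ Set.Icc (a i) (a i + L)}

/-- Vector potential `A^R_j(X_n, Y_m)` felt by particle `j` inside the box, created by the
other particles inside the box and the `m` fixed particles outside. -/
def AvecQ (R : ℝ) {n m : ℕ} (X : Fin n → E2) (Y : Fin m → E2) (j : Fin n) : E2 :=
  (∑ k ∈ Finset.univ.erase j, ((regNorm R (X j - X k)) ^ 2)⁻¹ • perp (X j - X k))
    + ∑ k : Fin m, ((regNorm R (X j - Y k)) ^ 2)⁻¹ • perp (X j - Y k)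

/-- The scalar potential `V_R(X_n, Y_m)`. -/
def Vpot (R : ℝ) {n m : ℕ} (X : Fin n → E2) (Y : Fin m → E2) : ℝ :=
  (2 / R ^ 2) *
      (∑ j : Fin n, ∑ k ∈ Finset.univ.erase j, Set.indicator (Metric.ball (X k) R) 1 (X j))
    + (2 / R ^ 2) *
      (∑ j : Fin n, ∑ k : Fin m, Set.indicator (Metric.ball (Y k) R) 1 (X j))

/-- Component `c` of `(−i∇_{x_j} + α A^R_j(X_n,Y_m)) Ψ` at configuration `X`. -/
def covDQ (R α : ℝ) {n m : ℕ} (Ψ : (Fin n → E2) → ℂ) (Y : Fin m → E2) (j : Fin n)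
    (X : Fin n → E2) (c : Fin 2) : ℂ :=
  -Complex.I * fderiv ℝ Ψ X (dirv n j c) + ((α * AvecQ R X Y j c : ℝ) : ℂ) * Ψ X

/-- The energy functional `E^R_n(Q, Y_m)[Ψ]`. -/
def energyFunc (R α : ℝ) (n m : ℕ) (Q : Set E2) (Y : Fin m → E2)
    (Ψ : (Fin n → E2) → ℂ) : ℝ :=
  (1 / 2) * ∑ j : Fin n,
      (∫ X in Set.univ.pi fun _ : Fin n => Q, ∑ c : Fin 2, ‖covDQ R α Ψ Y j X c‖ ^ 2)
    + (1 / 4) * ∑ j : Fin n,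
      (∫ X in Set.univ.pi fun _ : Fin n => Q, ∑ c : Fin 2, gradAbs Ψ j X c ^ 2)
    + (1 / 4) * ∫ X in Set.univ.pi fun _ : Fin n => Q, Vpot R X Y * ‖Ψ X‖ ^ 2

/-- The fermionic Neumann ground-state energy `E^R_n(Q, m)`: infimum of the energy functional
over the positions `Y_m` of the `m` exterior particles and over `L²(Qⁿ)`-normalized
antisymmetric wave functions `Ψ_n`. -/
def neumannE (R α : ℝ) (n m : ℕ) (Q : Set E2) : ℝ :=
  sInf { e : ℝ | ∃ (Y : Fin m → E2) (Ψ : (Fin n → E2) → ℂ),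
    (∀ k, Y k ∉ Q) ∧ Antisym n Ψ ∧
    (∫ X in Set.univ.pi fun _ : Fin n => Q, ‖Ψ X‖ ^ 2) = 1 ∧
    e = energyFunc R α n m Q Y Ψ }


namespace TwoPB

open Finset MeasureTheory

/-- The unit square. -/
def Q : Set E2 := square 0 1

/-- The two-particle configuration box. -/
def SS : Set (Fin 2 → E2) := Set.univ.pi fun _ : Fin 2 => Q

lemma mem_Q {x : E2} : x ∈ Q ↔ ∀ i, x i ∈ Set.Icc (0:ℝ) 1 := by
  simp [Q, square]

lemma coord_abs_le_norm (w : E2) (i : Fin 2) : |w i| ≤ ‖w‖ := by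
  rw [EuclideanSpace.norm_eq]
  rw [← Real.sqrt_sq_eq_abs]
  apply Real.sqrt_le_sqrt
  fin_cases i <;> · simp [Fin.sum_univ_two]; positivity

lemma perp_apply_zero (x : E2) : perp x 0 = -(x 1) := by
  simp [perp, WithLp.equiv_symm_apply]

lemma perp_apply_one (x : E2) : perp x 1 = x 0 := by
  simp [perp, WithLp.equiv_symm_apply]

lemma norm_perp (x : E2) : ‖perp x‖ = ‖x‖ := by
  rw [EuclideanSpace.norm_eq, EuclideanSpace.norm_eq]
  congr 1
  rw [Fin.sum_univ_two, Fin.sum_univ_two, perp_apply_zero, perp_apply_one]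
  simp [norm_neg]
  ring

lemma continuous_perp : Continuous perp := by
  unfold perp
  apply (PiLp.continuous_toLp 2 (fun _ : Fin 2 => ℝ)).comp
  apply continuous_pi
  intro i
  fin_cases i
  · exact ((continuous_apply (1 : Fin 2)).comp (PiLp.continuous_ofLp 2 _)).neg
  · exact (continuous_apply (0 : Fin 2)).comp (PiLp.continuous_ofLp 2 _)

lemma continuous_coord (i : Fin 2) : Continuous fun x : E2 => x i :=
  (continuous_apply i).comp (PiLp.continuous_ofLp 2 _)

lemma regNorm_pos {R : ℝ} (hR : 0 < R) (x : E2) : 0 < regNorm R x :=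
  lt_of_lt_of_le hR (le_max_right _ _)

lemma norm_le_regNorm (R : ℝ) (x : E2) : ‖x‖ ≤ regNorm R x := le_max_left _ _

lemma continuous_regNorm {R : ℝ} : Continuous (regNorm R) :=
  continuous_norm.max continuous_const

/-! ### The trial state -/

/-- The linear functional `X ↦ X 0 0 - X 1 0`. -/
def T : (Fin 2 → E2) →L[ℝ] ℝ :=
  ((EuclideanSpace.proj (0 : Fin 2)).comp (ContinuousLinearMap.proj 0)) -
  ((EuclideanSpace.proj (0 : Fin 2)).comp (ContinuousLinearMap.proj 1))

lemma T_apply (X : Fin 2 → E2) : T X = X 0 0 - X 1 0 := rfl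

/-- The trial wave function. -/
def Psi : (Fin 2 → E2) → ℂ := fun X => ((Real.sqrt 6 * T X : ℝ) : ℂ)

lemma sqrt6_nonneg : (0:ℝ) ≤ Real.sqrt 6 := Real.sqrt_nonneg 6

lemma sqrt6_sq : Real.sqrt 6 ^ 2 = 6 := Real.sq_sqrt (by norm_num)

lemma sqrt6_le_three : Real.sqrt 6 ≤ 3 := by
  nlinarith [sqrt6_sq, sqrt6_nonneg]

lemma Psi_eq_clm : Psi = ⇑(Complex.ofRealCLM.comp (Real.sqrt 6 • T)) := by
  funext X
  simp [Psi]

lemma fderiv_Psi (X : Fin 2 → E2) :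
    fderiv ℝ Psi X = Complex.ofRealCLM.comp (Real.sqrt 6 • T) := by
  rw [Psi_eq_clm]
  exact ContinuousLinearMap.fderiv _

lemma norm_Psi (X : Fin 2 → E2) : ‖Psi X‖ = Real.sqrt 6 * |X 0 0 - X 1 0| := by
  rw [Psi, Complex.norm_real, Real.norm_eq_abs, abs_mul, abs_of_nonneg sqrt6_nonneg, T_apply]

lemma normsq_Psi (X : Fin 2 → E2) : ‖Psi X‖ ^ 2 = 6 * (X 0 0 - X 1 0) ^ 2 := by
  rw [norm_Psi, mul_pow, sqrt6_sq, sq_abs]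

lemma T_dirv_abs_le (j : Fin 2) (c : Fin 2) : |T (dirv 2 j c)| ≤ 1 := by
  fin_cases j <;> fin_cases c <;>
    simp [T_apply, dirv, Function.update_apply, basisVec, EuclideanSpace.single_apply]

lemma antisym_Psi : Antisym 2 Psi := by
  have hperm : ∀ σ : Equiv.Perm (Fin 2), σ = 1 ∨ σ = Equiv.swap 0 1 := by decide
  intro σ X
  rcases hperm σ with h | h <;> subst h
  · simp [Psi]
  · have hs : (Equiv.Perm.sign (Equiv.swap (0:Fin 2) 1) : ℤ) = -1 := by decide
    rw [hs]
    simp only [Psi, T_apply, Function.comp_apply, Equiv.swap_apply_left, Equiv.swap_apply_right]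
    push_cast
    ring

/-! ### The box -/

lemma isCompact_Q : IsCompact Q := by
  have hclosed : IsClosed Q := by
    have : Q = ⋂ i : Fin 2, (fun x : E2 => x i) ⁻¹' Set.Icc (0:ℝ) 1 := by
      ext x; simp [mem_Q]
    rw [this]
    exact isClosed_iInter fun i => (isClosed_Icc).preimage (continuous_coord i)
  have hbdd : Bornology.IsBounded Q := by
    apply Bornology.IsBounded.subset (Metric.isBounded_closedBall (x := (0:E2)) (r := 2))
    intro x hx
    rw [mem_Q] at hx
    simp only [Metric.mem_closedBall, dist_zero_right]
    rw [EuclideanSpace.norm_eq]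
    have h0 := hx 0
    have h1 := hx 1
    rw [show (2:ℝ) = Real.sqrt 4 by
      rw [show (4:ℝ) = 2^2 by norm_num, Real.sqrt_sq (by norm_num)]]
    apply Real.sqrt_le_sqrt
    rw [Fin.sum_univ_two]
    simp only [Real.norm_eq_abs, sq_abs]
    nlinarith [h0.1, h0.2, h1.1, h1.2]
  exact Metric.isCompact_of_isClosed_isBounded hclosed hbdd

lemma isCompact_SS : IsCompact SS := isCompact_univ_pi fun _ => isCompact_Q

/-- The identification of `E2` with `ℝ × ℝ`. -/
def e2r : E2 ≃ᵐ ℝ × ℝ :=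
  (MeasurableEquiv.toLp 2 (Fin 2 → ℝ)).symm.trans (MeasurableEquiv.piFinTwo fun _ => ℝ)

lemma e2r_apply (x : E2) : e2r x = (x 0, x 1) := rfl

lemma mp_e2r : MeasurePreserving e2r volume volume :=
  (volume_preserving_piFinTwo fun _ => ℝ).comp
    (EuclideanSpace.volume_preserving_symm_measurableEquiv_toLp (Fin 2))

lemma Q_preimage : Q = e2r ⁻¹' (Set.Icc (0:ℝ) 1 ×ˢ Set.Icc (0:ℝ) 1) := by
  ext x
  simp only [mem_Q, Set.mem_preimage, e2r_apply, Set.mem_prod]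
  constructor
  · intro h; exact ⟨h 0, h 1⟩
  · rintro ⟨h0, h1⟩ i; fin_cases i <;> assumption

lemma volume_Q : volume Q = 1 := by
  rw [Q_preimage, mp_e2r.measure_preimage
    ((measurableSet_Icc.prod measurableSet_Icc)).nullMeasurableSet]
  rw [Measure.volume_eq_prod, Measure.prod_prod, Real.volume_Icc]
  norm_num

lemma volume_SS : volume SS = 1 := by
  rw [SS, MeasureTheory.volume_pi_pi]
  simp [volume_Q]


/-! ### Integrals over the box -/

lemma setIntegral_Q (g : ℝ × ℝ → ℝ) :
    ∫ x in Q, g (e2r x) = ∫ p in (Set.Icc (0:ℝ) 1 ×ˢ Set.Icc (0:ℝ) 1), g p := by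
  rw [Q_preimage]
  exact mp_e2r.setIntegral_preimage_emb e2r.measurableEmbedding g _

lemma int_Icc_one : ∫ x in Set.Icc (0:ℝ) 1, (1:ℝ) = 1 := by
  simp [Real.volume_Icc]

lemma int_Icc_x : ∫ x in Set.Icc (0:ℝ) 1, x = 1/2 := by
  rw [MeasureTheory.integral_Icc_eq_integral_Ioc,
    ← intervalIntegral.integral_of_le zero_le_one, integral_id]
  norm_num

lemma int_Icc_x2 : ∫ x in Set.Icc (0:ℝ) 1, x^2 = 1/3 := by
  rw [MeasureTheory.integral_Icc_eq_integral_Ioc,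
    ← intervalIntegral.integral_of_le zero_le_one, integral_pow]
  norm_num

lemma intII (f g : ℝ → ℝ) :
    ∫ p in (Set.Icc (0:ℝ) 1 ×ˢ Set.Icc (0:ℝ) 1), f p.1 * g p.2
      = (∫ x in Set.Icc (0:ℝ) 1, f x) * ∫ x in Set.Icc (0:ℝ) 1, g x := by
  rw [Measure.volume_eq_prod, MeasureTheory.setIntegral_prod_mul]

lemma intQ_one : ∫ x in Q, (1:ℝ) = 1 := by
  simp [measureReal_def, volume_Q]

lemma intQ_x : ∫ x in Q, x 0 = 1/2 := by
  have h : (fun x : E2 => x 0) = fun x => (fun p : ℝ × ℝ => p.1 * 1) (e2r x) := by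
    funext x; simp [e2r_apply]
  rw [h, setIntegral_Q (fun p => p.1 * 1), intII (fun x => x) (fun _ => (1:ℝ)), int_Icc_x, int_Icc_one]
  norm_num

lemma intQ_x2 : ∫ x in Q, (x 0)^2 = 1/3 := by
  have h : (fun x : E2 => (x 0)^2) = fun x => (fun p : ℝ × ℝ => p.1^2 * 1) (e2r x) := by
    funext x; simp [e2r_apply]
  rw [h, setIntegral_Q (fun p => p.1^2 * 1), intII (fun x => x^2) (fun _ => (1:ℝ)), int_Icc_x2, int_Icc_one]
  norm_num

lemma intQQ (f g : E2 → ℝ) :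
    ∫ p in Q ×ˢ Q, f p.1 * g p.2 = (∫ x in Q, f x) * ∫ x in Q, g x := by
  rw [Measure.volume_eq_prod, MeasureTheory.setIntegral_prod_mul]

lemma integrableOn_QQ {f : E2 × E2 → ℝ} (hf : Continuous f) :
    IntegrableOn f (Q ×ˢ Q) volume :=
  hf.continuousOn.integrableOn_compact (isCompact_Q.prod isCompact_Q)

lemma continuous_coord_fst (i : Fin 2) : Continuous fun p : E2 × E2 => p.1 i :=
  (continuous_coord i).comp continuous_fst

lemma continuous_coord_snd (i : Fin 2) : Continuous fun p : E2 × E2 => p.2 i :=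
  (continuous_coord i).comp continuous_snd

lemma SS_preimage :
    SS = (MeasurableEquiv.piFinTwo fun _ : Fin 2 => E2) ⁻¹' (Q ×ˢ Q) := by
  ext X
  simp only [SS, Set.mem_pi, Set.mem_univ, forall_true_left, Set.mem_preimage,
    MeasurableEquiv.piFinTwo_apply, Set.mem_prod, Set.mem_univ_pi]
  exact ⟨fun h => ⟨h 0, h 1⟩, fun h i => by fin_cases i <;> [exact h.1; exact h.2]⟩

lemma setIntegral_SS (g : E2 × E2 → ℝ) :
    ∫ X in SS, g ((MeasurableEquiv.piFinTwo fun _ : Fin 2 => E2) X)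
      = ∫ p in Q ×ˢ Q, g p := by
  rw [SS_preimage]
  exact (volume_preserving_piFinTwo fun _ : Fin 2 => E2).setIntegral_preimage_emb
    (MeasurableEquiv.measurableEmbedding _) g _

lemma normalization_Psi : ∫ X in SS, ‖Psi X‖ ^ 2 = 1 := by
  have h : (fun X : Fin 2 → E2 => ‖Psi X‖ ^ 2)
      = fun X => (fun p : E2 × E2 => 6 * (p.1 0 - p.2 0)^2)
          ((MeasurableEquiv.piFinTwo fun _ : Fin 2 => E2) X) := by
    funext X
    rw [normsq_Psi]
    simp [MeasurableEquiv.piFinTwo_apply]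
  rw [h, setIntegral_SS (fun p => 6 * (p.1 0 - p.2 0)^2)]
  have key : ∀ p : E2 × E2, 6 * (p.1 0 - p.2 0)^2
      = (6 * (p.1 0)^2) * 1 + ((-12) * (p.1 0)) * (p.2 0) + 1 * (6 * (p.2 0)^2) := by
    intro p; ring
  have ha : IntegrableOn (fun p : E2 × E2 => (6 * (p.1 0)^2) * 1) (Q ×ˢ Q) volume :=
    integrableOn_QQ ((continuous_const.mul ((continuous_coord_fst 0).pow 2)).mul continuous_const)
  have hb : IntegrableOn (fun p : E2 × E2 => ((-12) * (p.1 0)) * (p.2 0)) (Q ×ˢ Q) volume :=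
    integrableOn_QQ (((continuous_const.mul (continuous_coord_fst 0)).mul (continuous_coord_snd 0)))
  have hc : IntegrableOn (fun p : E2 × E2 => 1 * (6 * (p.2 0)^2)) (Q ×ˢ Q) volume :=
    integrableOn_QQ (continuous_const.mul (continuous_const.mul ((continuous_coord_snd 0).pow 2)))
  have step1 : ∫ p in Q ×ˢ Q, 6 * (p.1 0 - p.2 0)^2
      = ∫ p in Q ×ˢ Q, ((6 * (p.1 0)^2) * 1 + ((-12) * (p.1 0)) * (p.2 0)
          + 1 * (6 * (p.2 0)^2)) := by simp_rw [key]
  have step2 : ∫ p in Q ×ˢ Q, ((6 * (p.1 0)^2) * 1 + ((-12) * (p.1 0)) * (p.2 0)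
          + 1 * (6 * (p.2 0)^2))
      = (∫ p in Q ×ˢ Q, ((6 * (p.1 0)^2) * 1 + ((-12) * (p.1 0)) * (p.2 0)))
          + ∫ p in Q ×ˢ Q, 1 * (6 * (p.2 0)^2) := MeasureTheory.integral_add (ha.add hb) hc
  have step3 : ∫ p in Q ×ˢ Q, ((6 * (p.1 0)^2) * 1 + ((-12) * (p.1 0)) * (p.2 0))
      = (∫ p in Q ×ˢ Q, (6 * (p.1 0)^2) * 1) + ∫ p in Q ×ˢ Q, ((-12) * (p.1 0)) * (p.2 0) :=
    MeasureTheory.integral_add ha hb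
  rw [step1, step2, step3]
  rw [intQQ (fun x => 6 * (x 0)^2) (fun _ => (1:ℝ)),
    intQQ (fun x => (-12) * (x 0)) (fun x => x 0),
    intQQ (fun _ => (1:ℝ)) (fun x => 6 * (x 0)^2)]
  have e1 : ∫ x in Q, 6 * (x 0)^2 = 2 := by
    rw [MeasureTheory.integral_const_mul, intQ_x2]; norm_num
  have e2 : ∫ x in Q, (-12) * (x 0) = -6 := by
    rw [MeasureTheory.integral_const_mul, intQ_x]; norm_num
  rw [e1, e2, intQ_one, intQ_x]
  norm_num

/-! ### Generic bound for integrals over the box -/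

lemma key_le {f : (Fin 2 → E2) → ℝ} (hm : AEStronglyMeasurable f (volume.restrict SS))
    {K : ℝ} (hK : ∀ X ∈ SS, |f X| ≤ K) : ∫ X in SS, f X ≤ K := by
  have hvol : volume SS < ⊤ := by rw [volume_SS]; exact ENNReal.one_lt_top
  have h := MeasureTheory.norm_setIntegral_le_of_norm_le_const (μ := volume) (s := SS)
    (f := f) (C := K) hvol (fun x hx => by simpa [Real.norm_eq_abs] using hK x hx)
  calc ∫ X in SS, f X ≤ |∫ X in SS, f X| := le_abs_self _
    _ ≤ K * (volume SS).toReal := by simpa [Real.norm_eq_abs, measureReal_def] using h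
    _ = K := by rw [volume_SS]; simp

/-! ### The exterior particles -/

/-- The common position of the exterior particles. -/
def ypt (m : ℕ) (R : ℝ) : E2 := (WithLp.equiv 2 (Fin 2 → ℝ)).symm ![(m : ℝ) + R + 2, 0]

lemma ypt_zero (m : ℕ) (R : ℝ) : ypt m R 0 = (m : ℝ) + R + 2 := by
  simp [ypt, WithLp.equiv_symm_apply]

lemma ypt_notin {m : ℕ} {R : ℝ} (hR : 0 < R) : ypt m R ∉ Q := by
  rw [mem_Q]
  intro h
  have := (h 0).2
  rw [ypt_zero] at this
  have : (0:ℝ) ≤ (m:ℝ) := Nat.cast_nonneg m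
  linarith [(h 0).2, ypt_zero m R ▸ (h 0).2]

lemma ypt_far {m : ℕ} {R : ℝ} (hR : 0 < R) {x : E2} (hx : x ∈ Q) :
    (m : ℝ) + R + 1 ≤ ‖x - ypt m R‖ := by
  have h0 : (x - ypt m R) 0 = x 0 - ((m : ℝ) + R + 2) := by
    rw [PiLp.sub_apply, ypt_zero]
  have hc := coord_abs_le_norm (x - ypt m R) 0
  rw [h0] at hc
  have hx0 := (mem_Q.mp hx) 0
  have hm : (0:ℝ) ≤ (m:ℝ) := Nat.cast_nonneg m
  have : (m : ℝ) + R + 1 ≤ |x 0 - ((m : ℝ) + R + 2)| := by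
    rw [abs_sub_comm, abs_of_nonneg (by linarith [hx0.2])]
    linarith [hx0.2]
  linarith

/-! ### Pointwise bounds -/

lemma psi_le_three {X : Fin 2 → E2} (hX : X ∈ SS) : ‖Psi X‖ ≤ 3 := by
  have h0 := (mem_Q.mp (hX 0 (Set.mem_univ 0))) 0
  have h1 := (mem_Q.mp (hX 1 (Set.mem_univ 1))) 0
  rw [norm_Psi]
  have habs : |X 0 0 - X 1 0| ≤ 1 := by
    rw [abs_sub_le_iff]; constructor <;> linarith [h0.1, h0.2, h1.1, h1.2]
  calc Real.sqrt 6 * |X 0 0 - X 1 0| ≤ Real.sqrt 6 * 1 :=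
        mul_le_mul_of_nonneg_left habs sqrt6_nonneg
    _ ≤ 3 := by rw [mul_one]; exact sqrt6_le_three

lemma psi_le_dist (X : Fin 2 → E2) : ‖Psi X‖ ≤ Real.sqrt 6 * ‖X 0 - X 1‖ := by
  rw [norm_Psi]
  have : |X 0 0 - X 1 0| ≤ ‖X 0 - X 1‖ := by
    have := coord_abs_le_norm (X 0 - X 1) 0
    rwa [PiLp.sub_apply] at this
  exact mul_le_mul_of_nonneg_left this sqrt6_nonneg

lemma fderiv_psi_norm_le (X : Fin 2 → E2) (j c : Fin 2) :
    ‖fderiv ℝ Psi X (dirv 2 j c)‖ ≤ 3 := by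
  rw [fderiv_Psi]
  have : (Complex.ofRealCLM.comp (Real.sqrt 6 • T)) (dirv 2 j c)
      = ((Real.sqrt 6 * T (dirv 2 j c) : ℝ) : ℂ) := by
    simp
  rw [this, Complex.norm_real, Real.norm_eq_abs, abs_mul, abs_of_nonneg sqrt6_nonneg]
  calc Real.sqrt 6 * |T (dirv 2 j c)| ≤ Real.sqrt 6 * 1 :=
        mul_le_mul_of_nonneg_left (T_dirv_abs_le j c) sqrt6_nonneg
    _ ≤ 3 := by rw [mul_one]; exact sqrt6_le_three

lemma smul_perp_norm {R : ℝ} (hR : 0 < R) (z : E2) :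
    ‖((regNorm R z ^ 2)⁻¹ : ℝ) • perp z‖ = (regNorm R z ^ 2)⁻¹ * ‖z‖ := by
  rw [norm_smul, norm_perp, Real.norm_eq_abs, abs_of_nonneg]
  positivity

lemma Aint_mul_psi_le {R : ℝ} (hR : 0 < R) (j : Fin 2) (X : Fin 2 → E2) :
    ‖∑ k ∈ Finset.univ.erase j, ((regNorm R (X j - X k)) ^ 2)⁻¹ • perp (X j - X k)‖
      * ‖Psi X‖ ≤ 3 := by
  have main : ∀ z : E2, |z 0| = |X 0 0 - X 1 0| →
      ‖((regNorm R z ^ 2)⁻¹ : ℝ) • perp z‖ * ‖Psi X‖ ≤ 3 := by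
    intro z hz
    rw [smul_perp_norm hR, norm_Psi, ← hz]
    have hM : 0 < regNorm R z := regNorm_pos hR z
    have hzM : ‖z‖ ≤ regNorm R z := norm_le_regNorm R z
    have hz0 : |z 0| ≤ ‖z‖ := coord_abs_le_norm z 0
    have hkey : ‖z‖ * |z 0| ≤ regNorm R z ^ 2 := by nlinarith [norm_nonneg z, abs_nonneg (z 0)]
    have step : (regNorm R z ^ 2)⁻¹ * ‖z‖ * (Real.sqrt 6 * |z 0|)
        = Real.sqrt 6 * ((‖z‖ * |z 0|) * (regNorm R z ^ 2)⁻¹) := by ring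
    rw [step]
    calc Real.sqrt 6 * ((‖z‖ * |z 0|) * (regNorm R z ^ 2)⁻¹)
        ≤ Real.sqrt 6 * ((regNorm R z ^ 2) * (regNorm R z ^ 2)⁻¹) := by
          apply mul_le_mul_of_nonneg_left _ sqrt6_nonneg
          apply mul_le_mul_of_nonneg_right hkey
          positivity
      _ = Real.sqrt 6 := by field_simp
      _ ≤ 3 := sqrt6_le_three
  have hj : j = 0 ∨ j = 1 := by omega
  rcases hj with rfl | rfl
  · rw [show (Finset.univ.erase (0 : Fin 2)) = {1} by decide, Finset.sum_singleton]
    apply main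
    rw [PiLp.sub_apply]
  · rw [show (Finset.univ.erase (1 : Fin 2)) = {0} by decide, Finset.sum_singleton]
    apply main
    rw [PiLp.sub_apply, abs_sub_comm]

lemma Aext_mul_psi_le {R : ℝ} (hR : 0 < R) {m : ℕ} (j : Fin 2) {X : Fin 2 → E2} (hX : X ∈ SS) :
    ‖∑ _k : Fin m, ((regNorm R (X j - ypt m R)) ^ 2)⁻¹ • perp (X j - ypt m R)‖
      * ‖Psi X‖ ≤ 3 := by
  have hXj : X j ∈ Q := hX j (Set.mem_univ j)
  set w := X j - ypt m R with hw
  have hfar : (m : ℝ) + R + 1 ≤ ‖w‖ := ypt_far hR hXj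
  have hM : 0 < regNorm R w := regNorm_pos hR w
  have hwM : ‖w‖ ≤ regNorm R w := norm_le_regNorm R w
  have hsum : ‖∑ _k : Fin m, ((regNorm R w ^ 2)⁻¹ : ℝ) • perp w‖
      ≤ (m : ℝ) * ((regNorm R w ^ 2)⁻¹ * ‖w‖) := by
    calc ‖∑ _k : Fin m, ((regNorm R w ^ 2)⁻¹ : ℝ) • perp w‖
        ≤ ∑ _k : Fin m, ‖((regNorm R w ^ 2)⁻¹ : ℝ) • perp w‖ := norm_sum_le _ _
      _ = (m : ℝ) * ((regNorm R w ^ 2)⁻¹ * ‖w‖) := by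
          rw [Finset.sum_const, Finset.card_univ, Fintype.card_fin, nsmul_eq_mul,
            smul_perp_norm hR]
  have hterm : (m : ℝ) * ((regNorm R w ^ 2)⁻¹ * ‖w‖) ≤ 1 := by
    have h1 : (regNorm R w ^ 2)⁻¹ * ‖w‖ ≤ (regNorm R w)⁻¹ := by
      rw [pow_two, mul_inv]
      have : (regNorm R w)⁻¹ * ‖w‖ ≤ 1 := by
        rw [inv_mul_le_iff₀ hM, mul_one]; exact hwM
      calc (regNorm R w)⁻¹ * (regNorm R w)⁻¹ * ‖w‖
          = (regNorm R w)⁻¹ * ((regNorm R w)⁻¹ * ‖w‖) := by ring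
        _ ≤ (regNorm R w)⁻¹ * 1 := mul_le_mul_of_nonneg_left this (by positivity)
        _ = (regNorm R w)⁻¹ := mul_one _
    have h2 : (regNorm R w)⁻¹ ≤ ((m : ℝ) + 1)⁻¹ := by
      apply inv_anti₀
      · positivity
      · calc (m : ℝ) + 1 ≤ (m : ℝ) + R + 1 := by linarith
          _ ≤ ‖w‖ := hfar
          _ ≤ regNorm R w := hwM
    calc (m : ℝ) * ((regNorm R w ^ 2)⁻¹ * ‖w‖) ≤ (m : ℝ) * ((m : ℝ) + 1)⁻¹ := by
          apply mul_le_mul_of_nonneg_left (le_trans h1 h2) (Nat.cast_nonneg m)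
      _ ≤ 1 := by
          rw [mul_inv_le_iff₀' (by positivity)]; linarith
  calc ‖∑ _k : Fin m, ((regNorm R w ^ 2)⁻¹ : ℝ) • perp w‖ * ‖Psi X‖
      ≤ 1 * ‖Psi X‖ := mul_le_mul_of_nonneg_right (le_trans hsum hterm) (norm_nonneg _)
    _ = ‖Psi X‖ := one_mul _
    _ ≤ 3 := psi_le_three hX

lemma avec_mul_psi_le {R : ℝ} (hR : 0 < R) {m : ℕ} (j c : Fin 2) {X : Fin 2 → E2}
    (hX : X ∈ SS) :
    |AvecQ R X (fun _ : Fin m => ypt m R) j c| * ‖Psi X‖ ≤ 6 := by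
  rw [AvecQ]
  set u := ∑ k ∈ Finset.univ.erase j, ((regNorm R (X j - X k)) ^ 2)⁻¹ • perp (X j - X k)
  set v := ∑ _k : Fin m, ((regNorm R (X j - ypt m R)) ^ 2)⁻¹ • perp (X j - ypt m R)
  have habs : |(u + v) c| ≤ ‖u‖ + ‖v‖ :=
    le_trans (coord_abs_le_norm (u + v) c) (norm_add_le u v)
  calc |(u + v) c| * ‖Psi X‖ ≤ (‖u‖ + ‖v‖) * ‖Psi X‖ :=
        mul_le_mul_of_nonneg_right habs (norm_nonneg _)
    _ = ‖u‖ * ‖Psi X‖ + ‖v‖ * ‖Psi X‖ := by ring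
    _ ≤ 3 + 3 := add_le_add (Aint_mul_psi_le hR j X) (Aext_mul_psi_le hR j hX)
    _ = 6 := by norm_num

lemma covD_le {R α : ℝ} (hR : 0 < R) (hα : α ∈ Set.Icc (0:ℝ) 2) {m : ℕ} (j c : Fin 2)
    {X : Fin 2 → E2} (hX : X ∈ SS) :
    ‖covDQ R α Psi (fun _ : Fin m => ypt m R) j X c‖ ≤ 15 := by
  rw [covDQ]
  calc ‖-Complex.I * fderiv ℝ Psi X (dirv 2 j c)
        + ((α * AvecQ R X (fun _ : Fin m => ypt m R) j c : ℝ) : ℂ) * Psi X‖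
      ≤ ‖-Complex.I * fderiv ℝ Psi X (dirv 2 j c)‖
        + ‖((α * AvecQ R X (fun _ : Fin m => ypt m R) j c : ℝ) : ℂ) * Psi X‖ := norm_add_le _ _
    _ ≤ 3 + 12 := by
        apply add_le_add
        · rw [norm_mul, norm_neg, Complex.norm_I, one_mul]
          exact fderiv_psi_norm_le X j c
        · rw [norm_mul, Complex.norm_real, Real.norm_eq_abs, abs_mul]
          have hαle : |α| ≤ 2 := by rw [abs_of_nonneg hα.1]; exact hα.2
          calc |α| * |AvecQ R X (fun _ : Fin m => ypt m R) j c| * ‖Psi X‖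
              ≤ 2 * (|AvecQ R X (fun _ : Fin m => ypt m R) j c| * ‖Psi X‖) := by
                rw [mul_assoc]
                apply mul_le_mul_of_nonneg_right hαle
                positivity
            _ ≤ 2 * 6 := by
                apply mul_le_mul_of_nonneg_left (avec_mul_psi_le hR j c hX) (by norm_num)
            _ = 12 := by norm_num
    _ = 15 := by norm_num

lemma lipschitz_normPsi : LipschitzWith 6 (fun Z : Fin 2 → E2 => ‖Psi Z‖) := by
  apply LipschitzWith.of_dist_le_mul
  intro X X'
  rw [Real.dist_eq]
  have h1 : |‖Psi X‖ - ‖Psi X'‖| ≤ ‖Psi X - Psi X'‖ := abs_norm_sub_norm_le _ _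
  have h2 : Psi X - Psi X' = ((Real.sqrt 6 * (T X - T X') : ℝ) : ℂ) := by
    simp [Psi]; push_cast; ring
  have h3 : ‖Psi X - Psi X'‖ = Real.sqrt 6 * |T X - T X'| := by
    rw [h2, Complex.norm_real, Real.norm_eq_abs, abs_mul, abs_of_nonneg sqrt6_nonneg]
  have h4 : |T X - T X'| ≤ 2 * dist X X' := by
    rw [T_apply, T_apply]
    have e0 : |X 0 0 - X' 0 0| ≤ dist X X' := by
      calc |X 0 0 - X' 0 0| = |(X 0 - X' 0) 0| := by rw [PiLp.sub_apply]
        _ ≤ ‖X 0 - X' 0‖ := coord_abs_le_norm _ 0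
        _ = dist (X 0) (X' 0) := (dist_eq_norm _ _).symm
        _ ≤ dist X X' := dist_le_pi_dist X X' 0
    have e1 : |X 1 0 - X' 1 0| ≤ dist X X' := by
      calc |X 1 0 - X' 1 0| = |(X 1 - X' 1) 0| := by rw [PiLp.sub_apply]
        _ ≤ ‖X 1 - X' 1‖ := coord_abs_le_norm _ 0
        _ = dist (X 1) (X' 1) := (dist_eq_norm _ _).symm
        _ ≤ dist X X' := dist_le_pi_dist X X' 1
    calc |X 0 0 - X 1 0 - (X' 0 0 - X' 1 0)| = |(X 0 0 - X' 0 0) - (X 1 0 - X' 1 0)| := by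
          ring_nf
      _ ≤ |X 0 0 - X' 0 0| + |X 1 0 - X' 1 0| := abs_sub _ _
      _ ≤ 2 * dist X X' := by linarith
  have key : |‖Psi X‖ - ‖Psi X'‖| ≤ 6 * dist X X' := by
    calc |‖Psi X‖ - ‖Psi X'‖| ≤ Real.sqrt 6 * |T X - T X'| := by rw [← h3]; exact h1
      _ ≤ 3 * (2 * dist X X') := by
          apply mul_le_mul sqrt6_le_three h4 (abs_nonneg _) (by norm_num)
      _ = 6 * dist X X' := by ring
  simpa using key

lemma norm_dirv_le (j c : Fin 2) : ‖dirv 2 j c‖ ≤ 1 := by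
  rw [pi_norm_le_iff_of_nonneg zero_le_one]
  intro i
  rw [dirv, Function.update_apply]
  by_cases h : i = j
  · rw [if_pos h, basisVec, EuclideanSpace.norm_single]
    simp
  · rw [if_neg h]
    simp

lemma gradAbs_le (j c : Fin 2) (X : Fin 2 → E2) : |gradAbs Psi j X c| ≤ 6 := by
  rw [gradAbs, ← Real.norm_eq_abs]
  calc ‖fderiv ℝ (fun Z => ‖Psi Z‖) X (dirv 2 j c)‖
      ≤ ‖fderiv ℝ (fun Z => ‖Psi Z‖) X‖ * ‖dirv 2 j c‖ :=
        (fderiv ℝ (fun Z => ‖Psi Z‖) X).le_opNorm _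
    _ ≤ 6 * 1 := by
        apply mul_le_mul _ (norm_dirv_le j c) (norm_nonneg _) (by norm_num)
        have := norm_fderiv_le_of_lipschitz ℝ (x₀ := X) lipschitz_normPsi
        simpa using this
    _ = 6 := mul_one 6

lemma vpot_mul_psi_le {R : ℝ} (hR : 0 < R) {m : ℕ} {X : Fin 2 → E2} (hX : X ∈ SS) :
    Vpot R X (fun _ : Fin m => ypt m R) * ‖Psi X‖ ^ 2 ≤ 24 ∧
    0 ≤ Vpot R X (fun _ : Fin m => ypt m R) * ‖Psi X‖ ^ 2 := by
  have hext : ∀ j : Fin 2, Set.indicator (Metric.ball (ypt m R) R) (1 : E2 → ℝ) (X j) = 0 := by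
    intro j
    apply Set.indicator_of_notMem
    rw [Metric.mem_ball]
    have := ypt_far (m := m) hR (hX j (Set.mem_univ j))
    rw [dist_eq_norm]
    push_neg
    calc R ≤ (m:ℝ) + R + 1 := by
          have : (0:ℝ) ≤ (m:ℝ) := Nat.cast_nonneg m; linarith
      _ ≤ ‖X j - ypt m R‖ := this
  have hVpot : Vpot R X (fun _ : Fin m => ypt m R)
      = (2 / R ^ 2) * (Set.indicator (Metric.ball (X 1) R) (1 : E2 → ℝ) (X 0)
          + Set.indicator (Metric.ball (X 0) R) (1 : E2 → ℝ) (X 1)) := by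
    rw [Vpot]
    rw [Fin.sum_univ_two, Fin.sum_univ_two,
      show (Finset.univ.erase (0 : Fin 2)) = {1} by decide,
      show (Finset.univ.erase (1 : Fin 2)) = {0} by decide,
      Finset.sum_singleton, Finset.sum_singleton]
    simp [hext]
  rw [hVpot]
  by_cases hd : dist (X 0) (X 1) < R
  · have i1 : Set.indicator (Metric.ball (X 1) R) (1 : E2 → ℝ) (X 0) = 1 := by
      rw [Set.indicator_of_mem (Metric.mem_ball.mpr hd)]; rfl
    have i2 : Set.indicator (Metric.ball (X 0) R) (1 : E2 → ℝ) (X 1) = 1 := by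
      rw [Set.indicator_of_mem (Metric.mem_ball.mpr (by rwa [dist_comm]))]; rfl
    rw [i1, i2, normsq_Psi]
    have hdd : |X 0 0 - X 1 0| ≤ dist (X 0) (X 1) := by
      rw [dist_eq_norm]
      have := coord_abs_le_norm (X 0 - X 1) 0
      rwa [PiLp.sub_apply] at this
    have hsq : (X 0 0 - X 1 0) ^ 2 ≤ R ^ 2 := by
      have hdist0 : (0:ℝ) ≤ dist (X 0) (X 1) := dist_nonneg
      nlinarith [abs_nonneg (X 0 0 - X 1 0), sq_abs (X 0 0 - X 1 0)]
    constructor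
    · have hR2 : (0:ℝ) < R ^ 2 := by positivity
      rw [div_mul_eq_mul_div, div_mul_eq_mul_div, div_le_iff₀ hR2]
      nlinarith
    · positivity
  · have i1 : Set.indicator (Metric.ball (X 1) R) (1 : E2 → ℝ) (X 0) = 0 := by
      apply Set.indicator_of_notMem
      rw [Metric.mem_ball]; exact hd
    have i2 : Set.indicator (Metric.ball (X 0) R) (1 : E2 → ℝ) (X 1) = 0 := by
      apply Set.indicator_of_notMem
      rw [Metric.mem_ball, dist_comm]; exact hd
    rw [i1, i2]
    norm_num

/-! ### Measurability -/

lemma continuous_Psi : Continuous Psi := by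
  rw [Psi_eq_clm]; exact ContinuousLinearMap.continuous _

lemma continuous_avec {R : ℝ} (hR : 0 < R) {m : ℕ} (Y : Fin m → E2) (j : Fin 2) :
    Continuous fun X : Fin 2 → E2 => AvecQ R X Y j := by
  unfold AvecQ
  apply Continuous.add
  · apply continuous_finset_sum
    intro k _
    have hsub : Continuous fun X : Fin 2 → E2 => X j - X k :=
      (continuous_apply j).sub (continuous_apply k)
    exact (((continuous_regNorm.comp hsub).pow 2).inv₀
      (fun X => pow_ne_zero 2 (ne_of_gt (regNorm_pos hR _)))).smul (continuous_perp.comp hsub)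
  · apply continuous_finset_sum
    intro k _
    have hsub : Continuous fun X : Fin 2 → E2 => X j - Y k :=
      (continuous_apply j).sub continuous_const
    exact (((continuous_regNorm.comp hsub).pow 2).inv₀
      (fun X => pow_ne_zero 2 (ne_of_gt (regNorm_pos hR _)))).smul (continuous_perp.comp hsub)

lemma continuous_covD_sum {R α : ℝ} (hR : 0 < R) {m : ℕ} (Y : Fin m → E2) (j : Fin 2) :
    Continuous fun X : Fin 2 → E2 => ∑ c : Fin 2, ‖covDQ R α Psi Y j X c‖ ^ 2 := by
  apply continuous_finset_sum
  intro c _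
  have heq : (fun X : Fin 2 → E2 => covDQ R α Psi Y j X c)
      = fun X => -Complex.I * ((Real.sqrt 6 * T (dirv 2 j c) : ℝ) : ℂ)
          + ((α * AvecQ R X Y j c : ℝ) : ℂ) * Psi X := by
    funext X
    rw [covDQ, fderiv_Psi]
    simp
  have hc : Continuous fun X : Fin 2 → E2 => covDQ R α Psi Y j X c := by
    rw [heq]
    apply Continuous.add continuous_const
    apply Continuous.mul _ continuous_Psi
    exact Complex.continuous_ofReal.comp
      (continuous_const.mul ((continuous_coord c).comp (continuous_avec hR Y j)))
  exact (hc.norm).pow 2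

lemma measurable_gradAbs_sum (j : Fin 2) :
    Measurable fun X : Fin 2 → E2 => ∑ c : Fin 2, gradAbs Psi j X c ^ 2 := by
  apply Finset.measurable_sum
  intro c _
  have : Measurable fun X : Fin 2 → E2 =>
      fderiv ℝ (fun Z => ‖Psi Z‖) X (dirv 2 j c) :=
    measurable_fderiv_apply_const ℝ (fun Z => ‖Psi Z‖) (dirv 2 j c)
  exact this.pow_const 2

lemma measurable_vpot_mul {R : ℝ} {m : ℕ} (Y : Fin m → E2) :
    Measurable fun X : Fin 2 → E2 => Vpot R X Y * ‖Psi X‖ ^ 2 := by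
  have hind : ∀ j k : Fin 2, Measurable fun X : Fin 2 → E2 =>
      Set.indicator (Metric.ball (X k) R) (1 : E2 → ℝ) (X j) := by
    intro j k
    have heq : (fun X : Fin 2 → E2 => Set.indicator (Metric.ball (X k) R) (1 : E2 → ℝ) (X j))
        = fun X => if dist (X j) (X k) < R then 1 else 0 := by
      funext X
      classical
      rw [Set.indicator_apply]
      simp only [Metric.mem_ball, Pi.one_apply]
    rw [heq]
    have hset : MeasurableSet {X : Fin 2 → E2 | dist (X j) (X k) < R} :=
      (isOpen_lt ((continuous_apply j).dist (continuous_apply k)) continuous_const).measurableSet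
    exact Measurable.ite hset measurable_const measurable_const
  have hinde : ∀ (j : Fin 2) (k : Fin m), Measurable fun X : Fin 2 → E2 =>
      Set.indicator (Metric.ball (Y k) R) (1 : E2 → ℝ) (X j) := by
    intro j k
    have heq : (fun X : Fin 2 → E2 => Set.indicator (Metric.ball (Y k) R) (1 : E2 → ℝ) (X j))
        = fun X => if dist (X j) (Y k) < R then 1 else 0 := by
      funext X
      classical
      rw [Set.indicator_apply]
      simp only [Metric.mem_ball, Pi.one_apply]
    rw [heq]
    have hset : MeasurableSet {X : Fin 2 → E2 | dist (X j) (Y k) < R} :=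
      (isOpen_lt ((continuous_apply j).dist continuous_const) continuous_const).measurableSet
    exact Measurable.ite hset measurable_const measurable_const
  have hV : Measurable fun X : Fin 2 → E2 => Vpot R X Y := by
    unfold Vpot
    apply Measurable.add
    · apply Measurable.const_mul
      apply Finset.measurable_sum
      intro j _
      apply Finset.measurable_sum
      intro k _
      exact hind j k
    · apply Measurable.const_mul
      apply Finset.measurable_sum
      intro j _
      apply Finset.measurable_sum
      intro k _
      exact hinde j k
  exact hV.mul ((continuous_Psi.norm.pow 2).measurable)

/-! ### The energy bound -/

lemma energy_le {R α : ℝ} (hR : 0 < R) (hα : α ∈ Set.Icc (0:ℝ) 2) (m : ℕ) :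
    energyFunc R α 2 m Q (fun _ : Fin m => ypt m R) Psi ≤ 492 := by
  set Y : Fin m → E2 := fun _ => ypt m R with hY
  have hI1 : ∀ j : Fin 2, ∫ X in SS, ∑ c : Fin 2, ‖covDQ R α Psi Y j X c‖ ^ 2 ≤ 450 := by
    intro j
    apply key_le ((continuous_covD_sum hR Y j).aestronglyMeasurable.restrict)
    intro X hX
    have hterm : ∀ c : Fin 2, ‖covDQ R α Psi Y j X c‖ ^ 2 ≤ 225 := by
      intro c
      have h := covD_le (m := m) hR hα j c hX
      nlinarith [norm_nonneg (covDQ R α Psi Y j X c)]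
    rw [abs_of_nonneg (Finset.sum_nonneg fun c _ => by positivity), Fin.sum_univ_two]
    linarith [hterm 0, hterm 1]
  have hI2 : ∀ j : Fin 2, ∫ X in SS, ∑ c : Fin 2, gradAbs Psi j X c ^ 2 ≤ 72 := by
    intro j
    apply key_le ((measurable_gradAbs_sum j).aestronglyMeasurable.restrict)
    intro X _
    have hterm : ∀ c : Fin 2, gradAbs Psi j X c ^ 2 ≤ 36 := by
      intro c
      have h := gradAbs_le j c X
      nlinarith [abs_nonneg (gradAbs Psi j X c), sq_abs (gradAbs Psi j X c)]
    rw [abs_of_nonneg (Finset.sum_nonneg fun c _ => by positivity), Fin.sum_univ_two]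
    linarith [hterm 0, hterm 1]
  have hI3 : ∫ X in SS, Vpot R X Y * ‖Psi X‖ ^ 2 ≤ 24 := by
    apply key_le ((measurable_vpot_mul Y).aestronglyMeasurable.restrict)
    intro X hX
    obtain ⟨hle, hnn⟩ := vpot_mul_psi_le (m := m) hR hX
    rw [abs_of_nonneg hnn]
    exact hle
  have hSS : (Set.univ.pi fun _ : Fin 2 => Q) = SS := rfl
  rw [energyFunc, hSS, Fin.sum_univ_two, Fin.sum_univ_two]
  linarith [hI1 0, hI1 1, hI2 0, hI2 1, hI3]

end TwoPB

/-- **Upper bound for the two-particle energy on the unit square.** -/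
theorem two_particle_energy_upper_bound :
    ∃ C : ℝ,
      ∀ (R : ℝ), 0 < R → ∀ (m : ℕ),
        ∀ α ∈ Set.Icc (0 : ℝ) 2,
          neumannE R α 2 m (square 0 1) ≤ C := by
  refine ⟨492, fun R hR m α hα => ?_⟩
  have hmem : energyFunc R α 2 m (square 0 1) (fun _ : Fin m => TwoPB.ypt m R) TwoPB.Psi
      ∈ { e : ℝ | ∃ (Y : Fin m → E2) (Ψ : (Fin 2 → E2) → ℂ),
        (∀ k, Y k ∉ square 0 1) ∧ Antisym 2 Ψ ∧
        (∫ X in Set.univ.pi fun _ : Fin 2 => square 0 1, ‖Ψ X‖ ^ 2) = 1 ∧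
        e = energyFunc R α 2 m (square 0 1) Y Ψ } := by
    refine ⟨fun _ => TwoPB.ypt m R, TwoPB.Psi, fun k => TwoPB.ypt_notin hR,
      TwoPB.antisym_Psi, TwoPB.normalization_Psi, rfl⟩
  rw [neumannE]
  by_cases hb : BddBelow { e : ℝ | ∃ (Y : Fin m → E2) (Ψ : (Fin 2 → E2) → ℂ),
      (∀ k, Y k ∉ square 0 1) ∧ Antisym 2 Ψ ∧
      (∫ X in Set.univ.pi fun _ : Fin 2 => square 0 1, ‖Ψ X‖ ^ 2) = 1 ∧
      e = energyFunc R α 2 m (square 0 1) Y Ψ }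
  · exact le_trans (csInf_le hb hmem) (TwoPB.energy_le hR hα m)
  · rw [Real.sInf_of_not_bddBelow hb]
    norm_num
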